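/- arXiv:2402.15007 — 3 statements merged into one kernel-verified Lean document; each statement's English description precedes it below -/
import Mathlib

section
/- Let μ be the standard Gaussian measure on ℝ^d and K ⊆ ℝ^d a symmetric closed convex set with μ(Kᶜ) ≤ δ < 1/2, where δ satisfies π(2 log(δ^{-1}) + 8) ≤ δ^{-1}. Then the closed Euclidean ball of radius √(log(δ^{-1})) centered at the origin is contained in K. -/
open MeasureTheory Real

noncomputable def stdGaussian (d : ℕ) : Measure (EuclideanSpace ℝ (Fin d)) :=
  volume.withDensity fun x => ENNReal.ofReal ((2 * π) ^ (-(d : ℝ) / 2) * exp (-‖x‖ ^ 2 / 2))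

open Set



lemma tail_lb (r : ℝ) (_hr : 0 ≤ r) :
    r / (r ^ 2 + 1) * exp (-r ^ 2 / 2) ≤ ∫ t in Set.Ici r, exp (-t ^ 2 / 2) := by
  have hfun : (fun t : ℝ => exp (-t ^ 2 / 2)) = fun t => exp (-(1/2) * t ^ 2) := by
    ext t; ring_nf
  have hint : Integrable (fun t : ℝ => exp (-t ^ 2 / 2)) := by
    rw [hfun]; exact integrable_exp_neg_mul_sq (by norm_num)
  set G : ℝ → ℝ := fun x => x / (x ^ 2 + 1) * exp (-x ^ 2 / 2) with hGdef
  set G' : ℝ → ℝ := fun x => ((1 - 2 * x ^ 2 - x ^ 4) / (x ^ 2 + 1) ^ 2) * exp (-x ^ 2 / 2)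
    with hG'def
  have hne : ∀ x : ℝ, x ^ 2 + 1 ≠ 0 := fun x => by positivity
  have hG : ∀ x : ℝ, HasDerivAt G (G' x) x := by
    intro x
    have h2 : HasDerivAt (fun x : ℝ => x ^ 2 + 1) (2 * x) x := by
      simpa using ((hasDerivAt_pow 2 x).add_const 1)
    have h1 : HasDerivAt (fun x : ℝ => x / (x ^ 2 + 1))
        ((1 * (x ^ 2 + 1) - x * (2 * x)) / (x ^ 2 + 1) ^ 2) x :=
      (hasDerivAt_id x).div h2 (hne x)
    have h3 : HasDerivAt (fun x : ℝ => -x ^ 2 / 2) (-x) x := by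
      have := (hasDerivAt_pow 2 x).neg.div_const 2
      refine this.congr_deriv (Eq.symm ?_)
      simp
      ring
    have h4 : HasDerivAt (fun x : ℝ => exp (-x ^ 2 / 2)) (exp (-x ^ 2 / 2) * (-x)) x :=
      h3.exp
    have hs : (1 - 2 * x ^ 2 - x ^ 4) / (x ^ 2 + 1) ^ 2
        = (1 * (x ^ 2 + 1) - x * (2 * x)) / (x ^ 2 + 1) ^ 2 + x / (x ^ 2 + 1) * (-x) := by
      field_simp
      ring
    have := h1.mul h4
    refine this.congr_deriv (Eq.symm ?_)
    linear_combination exp (-x ^ 2 / 2) * hs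
  have hcontG' : Continuous G' := by
    apply Continuous.mul
    · exact Continuous.div (by continuity) (by continuity) (fun x => pow_ne_zero _ (hne x))
    · continuity
  have key : ∀ T : ℝ, r ≤ T → G r - G T ≤ ∫ t in Set.Ici r, exp (-t ^ 2 / 2) := by
    intro T hT
    have hftc : ∫ x in r..T, G' x = G T - G r :=
      intervalIntegral.integral_eq_sub_of_hasDerivAt (fun x _ => hG x)
        (hcontG'.intervalIntegrable r T)
    have hmono : ∫ x in r..T, -exp (-x ^ 2 / 2) ≤ ∫ x in r..T, G' x := by
      apply intervalIntegral.integral_mono_on hT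
        (by exact (hint.intervalIntegrable (a := r) (b := T)).neg : IntervalIntegrable (fun x : ℝ => -exp (-x ^ 2 / 2)) volume r T) (hcontG'.intervalIntegrable r T)
      intro x _
      have hexp : G' x + exp (-x ^ 2 / 2) = (2 / (x ^ 2 + 1) ^ 2) * exp (-x ^ 2 / 2) := by
        rw [hG'def]; field_simp; ring
      nlinarith [mul_pos (by positivity : (0:ℝ) < 2 / (x ^ 2 + 1) ^ 2) (exp_pos (-x ^ 2 / 2))]
    have hub : ∫ x in r..T, exp (-x ^ 2 / 2) ≤ ∫ t in Set.Ici r, exp (-t ^ 2 / 2) := by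
      rw [intervalIntegral.integral_of_le hT]
      apply setIntegral_mono_set hint.integrableOn
        (Filter.Eventually.of_forall fun x => (exp_pos _).le)
      exact Filter.Eventually.of_forall fun x hx => hx.1.le
    rw [intervalIntegral.integral_neg, hftc] at hmono
    linarith
  have hlim : Filter.Tendsto G Filter.atTop (nhds 0) := by
    apply squeeze_zero' (g := fun T : ℝ => T⁻¹)
    · filter_upwards [Filter.eventually_ge_atTop (0:ℝ)] with T hT
      positivity
    · filter_upwards [Filter.eventually_ge_atTop (1:ℝ)] with T hT
      have h1 : T / (T ^ 2 + 1) ≤ T⁻¹ := by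
        rw [div_le_iff₀ (by positivity)]
        rw [inv_mul_eq_div, le_div_iff₀ (by linarith)]
        nlinarith
      have h2 : exp (-T ^ 2 / 2) ≤ 1 := by
        rw [exp_le_one_iff]; nlinarith
      calc G T ≤ T / (T ^ 2 + 1) * 1 := by
            apply mul_le_mul_of_nonneg_left h2 (by positivity)
        _ ≤ T⁻¹ := by rw [mul_one]; exact h1
    · exact tendsto_inv_atTop_zero
  have : Filter.Tendsto (fun T => G r - G T) Filter.atTop (nhds (G r - 0)) :=
    (tendsto_const_nhds.sub hlim)
  rw [sub_zero] at this
  exact le_of_tendsto this ((Filter.eventually_ge_atTop r).mono fun T hT => key T hT)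


noncomputable def g1 : ℝ → ℝ := fun t => (Real.sqrt (2 * π))⁻¹ * exp (-t ^ 2 / 2)

lemma g1_nonneg (t : ℝ) : 0 ≤ g1 t := by
  unfold g1; positivity

lemma g1_cont : Continuous g1 := by unfold g1; continuity

lemma integrable_g1 : Integrable g1 := by
  unfold g1
  apply Integrable.const_mul
  have : (fun t : ℝ => exp (-t ^ 2 / 2)) = fun t => exp (-(1/2) * t ^ 2) := by ext t; ring_nf
  rw [this]
  exact integrable_exp_neg_mul_sq (by norm_num)

lemma integral_g1 : ∫ t, g1 t = 1 := by
  unfold g1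
  rw [integral_const_mul]
  have : (fun t : ℝ => exp (-t ^ 2 / 2)) = fun t => exp (-(1/2) * t ^ 2) := by ext t; ring_nf
  rw [this, integral_gaussian]
  rw [show π / (1/2 : ℝ) = 2 * π by ring]
  rw [inv_mul_cancel₀ (by positivity)]

lemma density_eq (d : ℕ) (x : EuclideanSpace ℝ (Fin d)) :
    (2 * π) ^ (-(d : ℝ) / 2) * exp (-‖x‖ ^ 2 / 2) = ∏ i, g1 (x i) := by
  have hnorm : ‖x‖ ^ 2 = ∑ i, (x i) ^ 2 := by
    rw [EuclideanSpace.norm_eq, Real.sq_sqrt (by positivity)]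
    simp [Real.norm_eq_abs, sq_abs]
  have h2π : (0:ℝ) < 2 * π := by positivity
  have hc : (2 * π) ^ (-(d : ℝ) / 2) = ((Real.sqrt (2 * π))⁻¹) ^ (d : ℕ) := by
    have h1 : ((2 * π) ^ (-(1:ℝ)/2) : ℝ) = (Real.sqrt (2 * π))⁻¹ := by
      rw [show (-(1:ℝ)/2) = -(1/2 : ℝ) by ring, Real.rpow_neg h2π.le, ← Real.sqrt_eq_rpow]
    rw [← h1, ← Real.rpow_natCast ((2*π) ^ (-(1:ℝ)/2)) d, ← Real.rpow_mul h2π.le]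
    congr 1
    push_cast
    ring
  have hexp : exp (-‖x‖ ^ 2 / 2) = ∏ i, exp (-(x i) ^ 2 / 2) := by
    rw [← Real.exp_sum]
    congr 1
    rw [hnorm]
    rw [← Finset.sum_div, ← Finset.sum_neg_distrib]
  rw [hc, hexp]
  unfold g1
  rw [Finset.prod_mul_distrib, Finset.prod_const, Finset.card_univ, Fintype.card_fin]

lemma measurable_proj' (d : ℕ) (i : Fin d) :
    Measurable fun x : EuclideanSpace ℝ (Fin d) => x i :=
  (EuclideanSpace.proj i).continuous.measurable

lemma cylinder_mass (d : ℕ) (i : Fin d) {s : Set ℝ} (hs : MeasurableSet s) :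
    stdGaussian d {x | x i ∈ s} = ENNReal.ofReal (∫ t in s, g1 t) := by
  have hA : MeasurableSet {x : EuclideanSpace ℝ (Fin d) | x i ∈ s} :=
    (measurable_proj' d i) hs
  have hF : Measurable fun x : EuclideanSpace ℝ (Fin d) =>
      ENNReal.ofReal ((2 * π) ^ (-(d : ℝ) / 2) * exp (-‖x‖ ^ 2 / 2)) := by
    apply ENNReal.measurable_ofReal.comp
    apply Measurable.const_mul
    exact (continuous_norm.pow 2).neg.div_const 2 |>.rexp.measurable
  rw [stdGaussian, withDensity_apply _ hA]
  have hmp := (EuclideanSpace.volume_preserving_symm_measurableEquiv_toLp (Fin d)).symm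
  rw [← hmp.map_eq, setLIntegral_map hA hF (MeasurableEquiv.measurable _)]
  have hpre : (MeasurableEquiv.toLp 2 (Fin d → ℝ)).symm.symm ⁻¹'
      {x : EuclideanSpace ℝ (Fin d) | x i ∈ s} = {y : Fin d → ℝ | y i ∈ s} := by
    ext y
    simp
  rw [hpre]
  have hsimp : ∀ y : Fin d → ℝ,
      ENNReal.ofReal ((2 * π) ^ (-(d : ℝ) / 2) *
        exp (-‖(MeasurableEquiv.toLp 2 (Fin d → ℝ)).symm.symm y‖ ^ 2 / 2))
      = ENNReal.ofReal (∏ j, g1 (y j)) := by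
    intro y
    rw [density_eq]
    rfl
  simp_rw [hsimp]
  have hBmeas : MeasurableSet {y : Fin d → ℝ | y i ∈ s} := (measurable_pi_apply i) hs
  have hIprod : Integrable (fun y : Fin d → ℝ => ∏ j, g1 (y j)) := by
    exact Integrable.fintype_prod (f := fun _ : Fin d => g1) (fun _ => integrable_g1)
  rw [← ofReal_integral_eq_lintegral_ofReal hIprod.integrableOn
    (Filter.Eventually.of_forall fun y => Finset.prod_nonneg fun j _ => g1_nonneg _)]
  congr 1
  rw [← integral_indicator hBmeas]
  have hind : ∀ y : Fin d → ℝ, ({y : Fin d → ℝ | y i ∈ s}).indicator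
      (fun y => ∏ j, g1 (y j)) y = ∏ j, (fun j => if j = i then s.indicator g1 else g1) j (y j) := by
    intro y
    by_cases hy : y i ∈ s
    · rw [Set.indicator_of_mem (show y ∈ {y : Fin d → ℝ | y i ∈ s} from hy)]
      apply Finset.prod_congr rfl
      intro j _
      by_cases hj : j = i
      · subst hj; simp [Set.indicator_of_mem hy]
      · simp [hj]
    · rw [Set.indicator_of_notMem (show y ∉ {y : Fin d → ℝ | y i ∈ s} from hy)]
      rw [eq_comm]
      apply Finset.prod_eq_zero (Finset.mem_univ i)
      simp [Set.indicator_of_notMem hy]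
  simp_rw [hind]
  rw [MeasureTheory.integral_fintype_prod_volume_eq_prod
    (f := fun j : Fin d => if j = i then s.indicator g1 else g1)]
  rw [Finset.prod_eq_single i]
  · simp [integral_indicator hs]
  · intro j _ hj
    simp [hj, integral_g1]
  · simp

lemma stdGaussian_univ (d : ℕ) : stdGaussian d Set.univ = 1 := by
  cases d with
  | zero =>
      rw [stdGaussian, withDensity_apply _ MeasurableSet.univ,
        Measure.restrict_univ, volume_euclideanSpace_eq_dirac, lintegral_dirac]
      norm_num
  | succ n =>
      have := cylinder_mass (n+1) 0 (MeasurableSet.univ (α := ℝ))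
      simp only [Set.mem_univ, Set.setOf_true] at this
      rw [this, Measure.restrict_univ, integral_g1]
      norm_num

lemma stdGaussian_map (d : ℕ)
    (e : EuclideanSpace ℝ (Fin d) ≃ₗᵢ[ℝ] EuclideanSpace ℝ (Fin d)) :
    Measure.map e (stdGaussian d) = stdGaussian d := by
  have hFmeas : Measurable fun x : EuclideanSpace ℝ (Fin d) =>
      ENNReal.ofReal ((2 * π) ^ (-(d : ℝ) / 2) * exp (-‖x‖ ^ 2 / 2)) := by
    apply ENNReal.measurable_ofReal.comp
    apply Measurable.const_mul
    exact (continuous_norm.pow 2).neg.div_const 2 |>.rexp.measurable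
  ext s hs
  rw [Measure.map_apply e.continuous.measurable hs]
  rw [stdGaussian, withDensity_apply _ (hs.preimage e.continuous.measurable),
    withDensity_apply _ hs]
  have : ∀ x : EuclideanSpace ℝ (Fin d),
      ENNReal.ofReal ((2 * π) ^ (-(d : ℝ) / 2) * exp (-‖x‖ ^ 2 / 2))
      = ENNReal.ofReal ((2 * π) ^ (-(d : ℝ) / 2) * exp (-‖e x‖ ^ 2 / 2)) := by
    intro x; rw [e.norm_map]
  rw [lintegral_congr this]
  exact (e.measurePreserving.setLIntegral_comp_preimage_emb
    (e.toHomeomorph.measurableEmbedding)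
    (fun x => ENNReal.ofReal ((2 * π) ^ (-(d:ℝ) / 2) * exp (-‖x‖ ^ 2 / 2))) s)

lemma halfspace_mass (d : ℕ) (θ : EuclideanSpace ℝ (Fin d)) (hθ : ‖θ‖ = 1) (r : ℝ) :
    stdGaussian d {x | r ≤ inner ℝ θ x} = ENNReal.ofReal (∫ t in Set.Ici r, g1 t) := by
  have hd : 0 < d := by
    rcases Nat.eq_zero_or_pos d with h | h
    · subst h
      have : θ = 0 := Subsingleton.elim θ 0
      rw [this, norm_zero] at hθ
      norm_num at hθ
    · exact h
  set i₀ : Fin d := ⟨0, hd⟩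
  set E₀ : EuclideanSpace ℝ (Fin d) := EuclideanSpace.single i₀ (1:ℝ) with hE₀def
  have hE₀ : ‖E₀‖ = 1 := by
    rw [hE₀def, EuclideanSpace.norm_single]; norm_num
  set e := Submodule.reflection (ℝ ∙ (θ - E₀))ᗮ with hedef
  have he : e θ = E₀ := Submodule.reflection_sub (by rw [hθ, hE₀])
  have hinner : ∀ x, (inner ℝ θ x : ℝ) = e x i₀ := by
    intro x
    rw [← LinearIsometryEquiv.inner_map_map e θ x, he, hE₀def]
    rw [EuclideanSpace.inner_single_left]
    simp
  have hset : {x : EuclideanSpace ℝ (Fin d) | r ≤ inner ℝ θ x}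
      = e ⁻¹' {y | y i₀ ∈ Set.Ici r} := by
    ext x
    simp only [Set.mem_setOf_eq, Set.mem_preimage, Set.mem_Ici, hinner]
  have hmeas : MeasurableSet {y : EuclideanSpace ℝ (Fin d) | y i₀ ∈ Set.Ici r} :=
    (measurable_proj' d i₀) measurableSet_Ici
  have hmap := Measure.map_apply (μ := stdGaussian d) e.continuous.measurable hmeas
  rw [stdGaussian_map d e] at hmap
  rw [hset, ← hmap]
  exact cylinder_mass d i₀ measurableSet_Ici

lemma numeric_lemma (δ L : ℝ) (hδ0 : 0 < δ) (hL : 1/2 < L) (hLδ : L = Real.log δ⁻¹)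
    (hcond : π * (2 * L + 8) ≤ δ⁻¹) :
    δ < 2 * ((Real.sqrt (2 * π))⁻¹ * (Real.sqrt L / (L + 1) * exp (-L / 2))) := by
  have hL0 : 0 < L := by linarith
  set s := exp (-L / 2) with hsdef
  have hs0 : 0 < s := exp_pos _
  have hs2 : s ^ 2 = δ := by
    rw [hsdef, sq, ← Real.exp_add, show (-L/2 + -L/2 : ℝ) = -L by ring, hLδ,
      Real.log_inv, neg_neg, Real.exp_log hδ0]
  have hcond' : π * δ * (2 * L + 8) ≤ 1 := by
    have h := mul_le_mul_of_nonneg_left hcond hδ0.le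
    rw [mul_inv_cancel₀ hδ0.ne'] at h
    nlinarith
  have h3 : (L + 1) ^ 2 < 2 * L * (2 * L + 8) := by nlinarith
  have hπδ : 0 < π * δ := mul_pos pi_pos hδ0
  have key : π * δ * (L + 1) ^ 2 < 2 * L := by
    calc π * δ * (L + 1) ^ 2 < π * δ * (2 * L * (2 * L + 8)) := by
          exact mul_lt_mul_of_pos_left h3 hπδ
      _ = (π * δ * (2 * L + 8)) * (2 * L) := by ring
      _ ≤ 1 * (2 * L) := mul_le_mul_of_nonneg_right hcond' (by linarith)
      _ = 2 * L := one_mul _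
  set c := Real.sqrt (2 * π) with hcdef
  have hc0 : 0 < c := Real.sqrt_pos.mpr (by positivity)
  have hc2 : c ^ 2 = 2 * π := Real.sq_sqrt (by positivity)
  set q := Real.sqrt L with hqdef
  have hq0 : 0 < q := Real.sqrt_pos.mpr hL0
  have hq2 : q ^ 2 = L := Real.sq_sqrt hL0.le
  have hsq : (δ * (c * (L + 1))) ^ 2 < (2 * (q * s)) ^ 2 := by
    have e1 : (δ * (c * (L + 1))) ^ 2 = δ * (2 * π) * (L + 1) ^ 2 * δ := by
      rw [mul_pow, mul_pow, hc2]; ring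
    have e2 : (2 * (q * s)) ^ 2 = 4 * L * δ := by
      rw [mul_pow, mul_pow, hq2, hs2]; ring
    rw [e1, e2]
    nlinarith
  have hab : δ * (c * (L + 1)) < 2 * (q * s) := by
    refine lt_of_pow_lt_pow_left₀ 2 (by positivity) hsq
  rw [show 2 * (c⁻¹ * (q / (L + 1) * s)) = (2 * (q * s)) / (c * (L + 1)) by
    field_simp]
  rw [lt_div_iff₀ (by positivity)]
  linarith [hab]

/-- under the smallness condition on δ, K contains the ball of radius
√(log δ⁻¹). -/
theorem stmt1 (d : ℕ) (K : Set (EuclideanSpace ℝ (Fin d))) (δ : ℝ)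
    (hKsym : ∀ x ∈ K, -x ∈ K) (hKclosed : IsClosed K) (hKconv : Convex ℝ K)
    (hδ0 : 0 < δ) (hδhalf : δ < 1 / 2)
    (hμ : stdGaussian d Kᶜ ≤ ENNReal.ofReal δ)
    (hδcond : π * (2 * Real.log δ⁻¹ + 8) ≤ δ⁻¹) :
    Metric.closedBall 0 (Real.sqrt (Real.log δ⁻¹)) ⊆ K := by
  intro x₀ hx₀
  by_contra hxK
  set L := Real.log δ⁻¹ with hLdef
  have h2δ : 2 < δ⁻¹ := by
    rw [show (2:ℝ) = (1/2 : ℝ)⁻¹ by norm_num]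
    exact inv_strictAnti₀ hδ0 hδhalf
  have hL : 1/2 < L := by
    have h1 : Real.log 2 < L := Real.log_lt_log (by norm_num) h2δ
    have h2 := Real.log_two_gt_d9
    linarith
  have hL0 : 0 < L := by linarith
  set r := Real.sqrt L with hrdef
  have hr0 : 0 < r := Real.sqrt_pos.mpr hL0
  have hr2 : r ^ 2 = L := Real.sq_sqrt hL0.le
  -- K is nonempty, hence contains 0
  have hKne : K.Nonempty := by
    rw [Set.nonempty_iff_ne_empty]
    intro h
    rw [h, Set.compl_empty, stdGaussian_univ] at hμ
    have h1 : ENNReal.ofReal δ < 1 := ENNReal.ofReal_lt_one.mpr (by linarith)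
    exact absurd hμ (not_le.mpr h1)
  obtain ⟨y, hy⟩ := hKne
  have h0K : (0 : EuclideanSpace ℝ (Fin d)) ∈ K := by
    have hy' := hKsym y hy
    have h := hKconv hy hy' (by norm_num : (0:ℝ) ≤ 1/2) (by norm_num : (0:ℝ) ≤ 1/2)
      (by norm_num : (1/2 : ℝ) + 1/2 = 1)
    simpa using h
  -- separation
  obtain ⟨f, u, hfK, hfx⟩ := geometric_hahn_banach_closed_point hKconv hKclosed hxK
  have hu0 : 0 < u := by
    have := hfK 0 h0K
    rwa [map_zero] at this
  set v := (InnerProductSpace.toDual ℝ (EuclideanSpace ℝ (Fin d))).symm f with hvdef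
  have hfv : ∀ x, (inner ℝ v x : ℝ) = f x := fun x => InnerProductSpace.toDual_symm_apply
  have hv0 : v ≠ 0 := by
    intro h
    rw [← hfv x₀, h, inner_zero_left] at hfx
    linarith
  have hnv : 0 < ‖v‖ := norm_pos_iff.mpr hv0
  set θ := ‖v‖⁻¹ • v with hθdef
  have hθ : ‖θ‖ = 1 := norm_smul_inv_norm hv0
  have hx₀r : ‖x₀‖ ≤ r := by
    simpa [Metric.mem_closedBall, dist_zero_right] using hx₀
  have hur : u < ‖v‖ * r := by
    have h3 : (inner ℝ v x₀ : ℝ) ≤ ‖v‖ * ‖x₀‖ := real_inner_le_norm v x₀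
    rw [hfv x₀] at h3
    nlinarith [hfx]
  have hKbound : ∀ a ∈ K, (inner ℝ θ a : ℝ) < r := by
    intro a ha
    have h1 : f a < u := hfK a ha
    rw [← hfv a] at h1
    have h2 : (inner ℝ θ a : ℝ) = ‖v‖⁻¹ * inner ℝ v a := real_inner_smul_left v a ‖v‖⁻¹
    rw [h2]
    calc ‖v‖⁻¹ * inner ℝ v a < ‖v‖⁻¹ * (‖v‖ * r) := by
          apply mul_lt_mul_of_pos_left _ (inv_pos.mpr hnv)
          linarith
      _ = r := by field_simp
  set A := {x : EuclideanSpace ℝ (Fin d) | r ≤ inner ℝ θ x} with hAdef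
  set B := {x : EuclideanSpace ℝ (Fin d) | r ≤ inner ℝ (-θ) x} with hBdef
  have hAB : A ∪ B ⊆ Kᶜ := by
    intro x hx
    intro hxK'
    rcases hx with hx | hx
    · exact absurd (hKbound x hxK') (not_lt.mpr hx)
    · have h1 : (inner ℝ (-θ) x : ℝ) = inner ℝ θ (-x) := by
        rw [inner_neg_left, inner_neg_right]
      have h2 := hKbound (-x) (hKsym x hxK')
      rw [← h1] at h2
      exact absurd h2 (not_lt.mpr hx)
  have hdisj : Disjoint A B := by
    rw [Set.disjoint_left]
    intro x hxA hxB
    rw [hAdef, Set.mem_setOf_eq] at hxA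
    rw [hBdef, Set.mem_setOf_eq, inner_neg_left] at hxB
    linarith
  have hBmeas : MeasurableSet B := by
    have hcont : Continuous fun x : EuclideanSpace ℝ (Fin d) => (inner ℝ (-θ) x : ℝ) :=
      Continuous.inner continuous_const continuous_id
    exact (isClosed_le continuous_const hcont).measurableSet
  have hmassA : stdGaussian d A = ENNReal.ofReal (∫ t in Set.Ici r, g1 t) :=
    halfspace_mass d θ hθ r
  have hmassB : stdGaussian d B = ENNReal.ofReal (∫ t in Set.Ici r, g1 t) :=
    halfspace_mass d (-θ) (by rw [norm_neg, hθ]) r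
  set T := ∫ t in Set.Ici r, g1 t with hTdef
  have hT0 : 0 ≤ T := setIntegral_nonneg measurableSet_Ici fun t _ => g1_nonneg t
  have hchain : stdGaussian d A + stdGaussian d B ≤ ENNReal.ofReal δ := by
    calc stdGaussian d A + stdGaussian d B = stdGaussian d (A ∪ B) :=
          (measure_union hdisj hBmeas).symm
      _ ≤ stdGaussian d Kᶜ := measure_mono hAB
      _ ≤ ENNReal.ofReal δ := hμ
  rw [hmassA, hmassB, ← ENNReal.ofReal_add hT0 hT0] at hchain
  have hTTδ : T + T ≤ δ := by
    rwa [ENNReal.ofReal_le_ofReal_iff hδ0.le] at hchain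
  have hTlb : (Real.sqrt (2 * π))⁻¹ * (r / (r ^ 2 + 1) * exp (-r ^ 2 / 2)) ≤ T := by
    rw [hTdef]
    unfold g1
    rw [MeasureTheory.integral_const_mul]
    exact mul_le_mul_of_nonneg_left (tail_lb r hr0.le) (by positivity)
  have hnum := numeric_lemma δ L hδ0 hL hLdef hδcond
  rw [hr2] at hTlb
  rw [hrdef] at hTlb
  linarith
end

section
/- Let K ⊆ ℝ^d be a nonempty closed convex set, n > 1, C = 8n²/(n²−1), and σ : [0,∞) → [0,∞) a C² function that is non-increasing, satisfies |σ'(t)| ≤ (t−1)/C for t ≥ 1 and σ'(t) = 0 for t ≤ 1, and |σ''(t)| ≤ 1/C everywhere. Then the function x ↦ σ(d(x,K)) + ((n²−1)/(2n²))·‖x‖² is convex on ℝ^d. -/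
open scoped RealInnerProductSpace

/-- σ is constant on `(-∞, 1]` since its derivative vanishes there. -/
private lemma sigma_const (σ : ℝ → ℝ) (hσ : ContDiff ℝ 2 σ)
    (hσ'0 : ∀ t, t ≤ 1 → deriv σ t = 0) : ∀ t, t ≤ 1 → σ t = σ 1 := by
  have hσd : Differentiable ℝ σ := hσ.differentiable (by norm_num)
  intro t ht
  rcases eq_or_lt_of_le ht with h | h
  · rw [h]
  · have hcon := constant_of_derivWithin_zero (f := σ) (a := t) (b := 1)
      (hσd.differentiableOn) ?_ 1 (Set.right_mem_Icc.mpr ht)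
    · rw [hcon]
    · intro x hx
      rw [(hσd x).derivWithin ((uniqueDiffOn_Icc h) x
        (Set.mem_Icc_of_Ico hx))]
      exact hσ'0 x (le_of_lt hx.2)

set_option maxHeartbeats 1000000 in
/-- Key one-dimensional lemma: `w ↦ σ(√(a² + w²)) + w²/C` is convex. -/
private lemma key (σ : ℝ → ℝ) (C : ℝ) (hC : 0 < C) (hσ : ContDiff ℝ 2 σ)
    (hσ'1 : ∀ t, 1 ≤ t → |deriv σ t| ≤ (t - 1) / C)
    (hσ'0 : ∀ t, t ≤ 1 → deriv σ t = 0)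
    (hσ'' : ∀ t, |deriv (deriv σ) t| ≤ 1 / C) (a : ℝ) :
    ConvexOn ℝ Set.univ (fun w => σ (Real.sqrt (a ^ 2 + w ^ 2)) + w ^ 2 / C) := by
  have hσd : Differentiable ℝ σ := hσ.differentiable (by norm_num)
  have hσ'cd : ContDiff ℝ 1 (deriv σ) := by
    have h2 : ContDiff ℝ (1 + 1) σ := by exact_mod_cast hσ
    exact (contDiff_succ_iff_deriv.mp h2).2.2
  have hσ'd : Differentiable ℝ (deriv σ) := hσ'cd.differentiable (by norm_num)
  have hconst : ∀ t, t ≤ 1 → σ t = σ 1 := sigma_const σ hσ hσ'0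
  set G : ℝ → ℝ :=
    fun w => deriv σ (Real.sqrt (a ^ 2 + w ^ 2)) * (w * (Real.sqrt (a ^ 2 + w ^ 2))⁻¹)
    with hGdef
  -- derivative of sqrt(a² + w²) when a² + w² > 0
  have hr : ∀ w : ℝ, 0 < a ^ 2 + w ^ 2 →
      HasDerivAt (fun w' => Real.sqrt (a ^ 2 + w' ^ 2))
        (w / Real.sqrt (a ^ 2 + w ^ 2)) w := by
    intro w hq
    have h1 : HasDerivAt (fun w' : ℝ => a ^ 2 + w' ^ 2) (2 * w) w := by
      simpa using (hasDerivAt_pow 2 w).const_add (a ^ 2)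
    have h2 := (Real.hasDerivAt_sqrt (ne_of_gt hq)).comp w h1
    have hRpos : 0 < Real.sqrt (a ^ 2 + w ^ 2) := Real.sqrt_pos.mpr hq
    refine h2.congr_deriv ?_
    ring
  -- first derivative
  have hstep1 : ∀ w, HasDerivAt (fun w' => σ (Real.sqrt (a ^ 2 + w' ^ 2))) (G w) w := by
    intro w
    rcases eq_or_lt_of_le (by positivity : (0:ℝ) ≤ a ^ 2 + w ^ 2) with hq | hq
    · -- a = 0, w = 0 : locally constant
      have hw0 : w = 0 := by nlinarith [sq_nonneg a, sq_nonneg w]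
      have ha0 : a ^ 2 = 0 := by nlinarith [sq_nonneg a, sq_nonneg w]
      subst hw0
      have hG0 : G 0 = 0 := by simp [hGdef]
      rw [hG0]
      have hmem : Set.Ioo (-1 : ℝ) 1 ∈ nhds (0 : ℝ) := Ioo_mem_nhds (by norm_num) (by norm_num)
      refine (hasDerivAt_const 0 (σ 1)).congr_of_eventuallyEq
        (Filter.eventuallyEq_of_mem hmem fun w' hw' => ?_)
      have h1 : Real.sqrt (a ^ 2 + w' ^ 2) = |w'| := by
        rw [ha0, zero_add, Real.sqrt_sq_eq_abs]
      have h2 : |w'| ≤ 1 := le_of_lt (abs_lt.mpr ⟨hw'.1, hw'.2⟩)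
      show σ (Real.sqrt (a ^ 2 + w' ^ 2)) = σ 1
      rw [h1, hconst _ h2]
    · have hR : HasDerivAt σ (deriv σ (Real.sqrt (a ^ 2 + w ^ 2)))
        (Real.sqrt (a ^ 2 + w ^ 2)) := (hσd _).hasDerivAt
      have hGe : G w = deriv σ (Real.sqrt (a ^ 2 + w ^ 2)) * (w / Real.sqrt (a ^ 2 + w ^ 2)) := by
        rw [hGdef, div_eq_mul_inv]
      rw [hGe]
      exact hR.comp w (hr w hq)
  -- second derivative (with lower bound)
  have hstep2 : ∀ w, ∃ S, HasDerivAt G S w ∧ 0 ≤ S + 2 / C := by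
    intro w
    rcases eq_or_lt_of_le (by positivity : (0:ℝ) ≤ a ^ 2 + w ^ 2) with hq | hq
    · -- locally G = 0
      refine ⟨0, ?_, by positivity⟩
      have hw0 : w = 0 := by nlinarith [sq_nonneg a, sq_nonneg w]
      have ha0 : a ^ 2 = 0 := by nlinarith [sq_nonneg a, sq_nonneg w]
      subst hw0
      have hmem : Set.Ioo (-1 : ℝ) 1 ∈ nhds (0 : ℝ) := Ioo_mem_nhds (by norm_num) (by norm_num)
      refine (hasDerivAt_const 0 (0:ℝ)).congr_of_eventuallyEq
        (Filter.eventuallyEq_of_mem hmem fun w' hw' => ?_)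
      have h1 : Real.sqrt (a ^ 2 + w' ^ 2) = |w'| := by
        rw [ha0, zero_add, Real.sqrt_sq_eq_abs]
      have h2 : |w'| ≤ 1 := le_of_lt (abs_lt.mpr ⟨hw'.1, hw'.2⟩)
      show G w' = 0
      rw [hGdef]
      simp only [h1, hσ'0 _ h2, zero_mul]
    · set R := Real.sqrt (a ^ 2 + w ^ 2) with hRdef
      have hRpos : 0 < R := Real.sqrt_pos.mpr hq
      have hR2 : R ^ 2 = a ^ 2 + w ^ 2 := Real.sq_sqrt (le_of_lt hq)
      have hrw := hr w hq
      have hd1 : HasDerivAt (fun w' => deriv σ (Real.sqrt (a ^ 2 + w' ^ 2)))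
          (deriv (deriv σ) R * (w / R)) w :=
        by have := ((hσ'd R).hasDerivAt).comp w hrw; exact this
      have hinv : HasDerivAt (fun w' => (Real.sqrt (a ^ 2 + w' ^ 2))⁻¹)
          (-(w / R) / R ^ 2) w := hrw.inv (ne_of_gt hRpos)
      have hfrac : HasDerivAt (fun w' => w' * (Real.sqrt (a ^ 2 + w' ^ 2))⁻¹)
          (1 * R⁻¹ + w * (-(w / R) / R ^ 2)) w := (hasDerivAt_id w).mul hinv
      refine ⟨deriv (deriv σ) R * (w / R) * (w * R⁻¹) +
        deriv σ R * (1 * R⁻¹ + w * (-(w / R) / R ^ 2)), hd1.mul hfrac, ?_⟩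
      -- bound the second derivative from below
      have hw2R : w ^ 2 ≤ R ^ 2 := by nlinarith [sq_nonneg a]
      have ha2 : a ^ 2 = R ^ 2 - w ^ 2 := by linarith
      have hSe : deriv (deriv σ) R * (w / R) * (w * R⁻¹) +
          deriv σ R * (1 * R⁻¹ + w * (-(w / R) / R ^ 2)) =
          deriv (deriv σ) R * (w ^ 2 / R ^ 2) + deriv σ R * (a ^ 2 / R ^ 3) := by
        rw [ha2]
        field_simp
        ring
      rw [hSe]
      have hb1 := abs_le.mp (hσ'' R)
      have hk0 : 0 ≤ w ^ 2 / R ^ 2 := by positivity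
      have hk1 : w ^ 2 / R ^ 2 ≤ 1 := by
        rw [div_le_one (by positivity)]; exact hw2R
      have h1C : 0 < 1 / C := by positivity
      have t1 : -(1 / C) ≤ deriv (deriv σ) R * (w ^ 2 / R ^ 2) := by
        nlinarith [mul_nonneg (by linarith [hb1.1] : (0:ℝ) ≤ deriv (deriv σ) R + 1 / C) hk0,
          mul_nonneg (le_of_lt h1C) (by linarith : (0:ℝ) ≤ 1 - w ^ 2 / R ^ 2)]
      have t2 : -(1 / C) ≤ deriv σ R * (a ^ 2 / R ^ 3) := by
        rcases le_or_gt R 1 with hR1 | hR1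
        · rw [hσ'0 R hR1, zero_mul]; linarith
        · have hb2 := abs_le.mp (hσ'1 R (le_of_lt hR1))
          have hk2 : 0 ≤ a ^ 2 / R ^ 3 := by positivity
          have key3 : (R - 1) * a ^ 2 ≤ R ^ 3 := by nlinarith [sq_nonneg a]
          have hfr : (R - 1) / C * (a ^ 2 / R ^ 3) ≤ 1 / C := by
            rw [div_mul_div_comm, div_le_div_iff₀ (by positivity) hC]
            nlinarith
          nlinarith [mul_nonneg (by linarith [hb2.1] : (0:ℝ) ≤ deriv σ R + (R - 1) / C) hk2]
      have h2C : 2 / C = 1 / C + 1 / C := by ring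
      linarith
  have hstep1' : ∀ w, HasDerivAt (fun w' => σ (Real.sqrt (a ^ 2 + w' ^ 2)) + w' ^ 2 / C)
      (G w + 2 * w / C) w := by
    intro w
    have h2 : HasDerivAt (fun w' : ℝ => w' ^ 2 / C) (2 * w / C) w := by
      simpa using (hasDerivAt_pow 2 w).div_const C
    exact (hstep1 w).add h2
  choose S hS hS0 using hstep2
  refine convexOn_of_hasDerivWithinAt2_nonneg (f' := fun w => G w + 2 * w / C)
    (f'' := fun w => S w + 2 / C) convex_univ ?_ ?_ ?_ ?_
  · have hdiffg : Differentiable ℝ (fun w' => σ (Real.sqrt (a ^ 2 + w' ^ 2)) + w' ^ 2 / C) :=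
      fun w => (hstep1' w).differentiableAt
    exact hdiffg.continuous.continuousOn
  · intro x _
    exact (hstep1' x).hasDerivWithinAt
  · intro x _
    have h2 : HasDerivAt (fun w : ℝ => 2 * w / C) (2 / C) x := by
      simpa using ((hasDerivAt_id x).const_mul 2).div_const C
    exact ((hS x).add h2).hasDerivWithinAt
  · intro x _
    exact hS0 x

set_option maxHeartbeats 1000000 in
/-- x ↦ σ(d(x,K)) + ((n²−1)/(2n²))‖x‖² is convex. -/
theorem stmt13 (d : ℕ) (K : Set (EuclideanSpace ℝ (Fin d))) (n : ℝ) (σ : ℝ → ℝ)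
    (hKne : K.Nonempty) (hKclosed : IsClosed K) (hKconv : Convex ℝ K)
    (hn : 1 < n) (C : ℝ) (hCdef : C = 8 * n ^ 2 / (n ^ 2 - 1))
    (hσ : ContDiff ℝ 2 σ) (hσmono : AntitoneOn σ (Set.Ici 0))
    (hσ'1 : ∀ t, 1 ≤ t → |deriv σ t| ≤ (t - 1) / C)
    (hσ'0 : ∀ t, t ≤ 1 → deriv σ t = 0)
    (hσ'' : ∀ t, |deriv (deriv σ) t| ≤ 1 / C) :
    ConvexOn ℝ Set.univ
      (fun x => σ (Metric.infDist x K) + ((n ^ 2 - 1) / (2 * n ^ 2)) * ‖x‖ ^ 2) := by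
  have hn2 : (0:ℝ) < n ^ 2 - 1 := by nlinarith
  have hC : 0 < C := by rw [hCdef]; positivity
  have h1C : 1 / C ≤ (n ^ 2 - 1) / (2 * n ^ 2) := by
    rw [hCdef, one_div_div, div_le_div_iff₀ (by positivity) (by positivity)]
    nlinarith
  set c : ℝ := (n ^ 2 - 1) / (2 * n ^ 2) with hc
  have hc0 : 0 ≤ c := le_of_lt (by rw [hc]; positivity)
  refine ⟨convex_univ, ?_⟩
  intro x _ z _ p q hp hq hpq
  simp only [smul_eq_mul]
  obtain rfl : q = 1 - p := by linarith
  by_cases hxz : x = z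
  · subst hxz
    have hx1 : p • x + (1 - p) • x = x := by
      rw [← add_smul]; norm_num
    rw [hx1]
    apply le_of_eq
    ring
  · set y := p • x + (1 - p) • z with hy0
    obtain ⟨P, hPK, hPd⟩ := hKclosed.exists_infDist_eq_dist hKne y
    obtain ⟨v, hv0⟩ : ∃ v : EuclideanSpace ℝ (Fin d), v = z - x := ⟨_, rfl⟩
    have hvne : v ≠ 0 := by rw [hv0]; exact sub_ne_zero.mpr (Ne.symm hxz)
    have hvn : (0:ℝ) < ‖v‖ := norm_pos_iff.mpr hvne
    obtain ⟨u, hu0⟩ : ∃ u : EuclideanSpace ℝ (Fin d), u = (‖v‖⁻¹ : ℝ) • v := ⟨_, rfl⟩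
    have hun : ‖u‖ = 1 := by rw [hu0]; exact norm_smul_inv_norm hvne
    have hvu : ‖v‖ • u = v := by
      rw [hu0, smul_smul, mul_inv_cancel₀ (ne_of_gt hvn), one_smul]
    obtain ⟨s, hs0⟩ : ∃ s : ℝ, s = ⟪x - P, u⟫ := ⟨_, rfl⟩
    obtain ⟨t, ht0⟩ : ∃ t : ℝ, t = s + ‖v‖ := ⟨_, rfl⟩
    obtain ⟨cp, hcp0⟩ : ∃ cp : EuclideanSpace ℝ (Fin d), cp = x - P - s • u := ⟨_, rfl⟩
    have hcu : ⟪cp, u⟫ = 0 := by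
      rw [hcp0, inner_sub_left, real_inner_smul_left, real_inner_self_eq_norm_sq, hun,
        ← hs0]
      ring
    obtain ⟨A, hA0⟩ : ∃ A : ℝ, A = ‖cp‖ := ⟨_, rfl⟩
    have hdecomp : ∀ b : ℝ, ‖cp + b • u‖ = Real.sqrt (A ^ 2 + b ^ 2) := by
      intro b
      have h2 : ‖cp + b • u‖ ^ 2 = A ^ 2 + b ^ 2 := by
        rw [norm_add_sq_real, real_inner_smul_right, hcu, norm_smul, hun, ← hA0]
        simp [Real.norm_eq_abs, sq_abs]
      rw [← h2, Real.sqrt_sq (norm_nonneg _)]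
    have hxP : x - P = cp + s • u := by rw [hcp0]; abel
    have hzP : z - P = cp + t • u := by
      have h1 : z - P = (x - P) + v := by rw [hv0]; abel
      rw [h1, hxP, ht0, add_smul]
      conv_lhs => rw [← hvu]
      abel
    have hyP : y - P = cp + (p * s + (1 - p) * t) • u := by
      have h1 : y - P = p • (x - P) + (1 - p) • (z - P) := by rw [hy0]; module
      rw [h1, hxP, hzP]; module
    have hnx : ‖x - P‖ = Real.sqrt (A ^ 2 + s ^ 2) := by rw [hxP, hdecomp]
    have hnz : ‖z - P‖ = Real.sqrt (A ^ 2 + t ^ 2) := by rw [hzP, hdecomp]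
    have hny : ‖y - P‖ = Real.sqrt (A ^ 2 + (p * s + (1 - p) * t) ^ 2) := by
      rw [hyP, hdecomp]
    have hdy : Metric.infDist y K = Real.sqrt (A ^ 2 + (p * s + (1 - p) * t) ^ 2) := by
      rw [hPd, dist_eq_norm, hny]
    have hdx_le : Metric.infDist x K ≤ Real.sqrt (A ^ 2 + s ^ 2) := by
      rw [← hnx, ← dist_eq_norm]
      exact Metric.infDist_le_dist_of_mem hPK
    have hdz_le : Metric.infDist z K ≤ Real.sqrt (A ^ 2 + t ^ 2) := by
      rw [← hnz, ← dist_eq_norm]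
      exact Metric.infDist_le_dist_of_mem hPK
    have hσx : σ (Real.sqrt (A ^ 2 + s ^ 2)) ≤ σ (Metric.infDist x K) :=
      hσmono (Set.mem_Ici.mpr Metric.infDist_nonneg)
        (Set.mem_Ici.mpr (Real.sqrt_nonneg _)) hdx_le
    have hσz : σ (Real.sqrt (A ^ 2 + t ^ 2)) ≤ σ (Metric.infDist z K) :=
      hσmono (Set.mem_Ici.mpr Metric.infDist_nonneg)
        (Set.mem_Ici.mpr (Real.sqrt_nonneg _)) hdz_le
    have hkey := (key σ C hC hσ hσ'1 hσ'0 hσ'' A).2 (Set.mem_univ s) (Set.mem_univ t)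
      hp hq (by ring)
    simp only [smul_eq_mul] at hkey
    have e3 : p * (σ (Real.sqrt (A ^ 2 + s ^ 2)) + s ^ 2 / C) +
        (1 - p) * (σ (Real.sqrt (A ^ 2 + t ^ 2)) + t ^ 2 / C) =
        p * σ (Real.sqrt (A ^ 2 + s ^ 2)) + (1 - p) * σ (Real.sqrt (A ^ 2 + t ^ 2)) +
        (p * s ^ 2 + (1 - p) * t ^ 2) / C := by ring
    rw [e3] at hkey
    have hv_xz : ‖x - z‖ = ‖v‖ := by rw [hv0, norm_sub_rev]
    have hst : (s - t) ^ 2 = ‖x - z‖ ^ 2 := by rw [ht0, hv_xz]; ring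
    have hquad1c : (p * s ^ 2 + (1 - p) * t ^ 2) / C - (p * s + (1 - p) * t) ^ 2 / C =
        p * (1 - p) * (s - t) ^ 2 / C := by ring
    have e1 : ‖y‖ ^ 2 = p ^ 2 * ‖x‖ ^ 2 + 2 * (p * (1 - p)) * ⟪x, z⟫ +
        (1 - p) ^ 2 * ‖z‖ ^ 2 := by
      rw [hy0, norm_add_sq_real, real_inner_smul_left, real_inner_smul_right,
        norm_smul, norm_smul]
      simp [Real.norm_eq_abs]
      rw [mul_pow, mul_pow, sq_abs, sq_abs]
      ring
    have e2 : ‖x - z‖ ^ 2 = ‖x‖ ^ 2 - 2 * ⟪x, z⟫ + ‖z‖ ^ 2 := norm_sub_sq_real x z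
    have hquad2c : c * (p * ‖x‖ ^ 2 + (1 - p) * ‖z‖ ^ 2) - c * ‖y‖ ^ 2 =
        c * (p * (1 - p) * ‖x - z‖ ^ 2) := by
      rw [e1, e2]; ring
    have hcancel : p * (1 - p) * (s - t) ^ 2 / C ≤ c * (p * (1 - p) * ‖x - z‖ ^ 2) := by
      rw [hst]
      have h0 : 0 ≤ p * (1 - p) * ‖x - z‖ ^ 2 :=
        mul_nonneg (mul_nonneg hp hq) (sq_nonneg _)
      have := mul_le_mul_of_nonneg_right h1C h0
      calc p * (1 - p) * ‖x - z‖ ^ 2 / C = 1 / C * (p * (1 - p) * ‖x - z‖ ^ 2) := by ring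
        _ ≤ c * (p * (1 - p) * ‖x - z‖ ^ 2) := this
    have hpx : p * σ (Real.sqrt (A ^ 2 + s ^ 2)) ≤ p * σ (Metric.infDist x K) :=
      mul_le_mul_of_nonneg_left hσx hp
    have hpz : (1 - p) * σ (Real.sqrt (A ^ 2 + t ^ 2)) ≤
        (1 - p) * σ (Metric.infDist z K) := mul_le_mul_of_nonneg_left hσz hq
    have hR : p * (σ (Metric.infDist x K) + c * ‖x‖ ^ 2) +
        (1 - p) * (σ (Metric.infDist z K) + c * ‖z‖ ^ 2) =
        p * σ (Metric.infDist x K) + (1 - p) * σ (Metric.infDist z K) +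
        c * (p * ‖x‖ ^ 2 + (1 - p) * ‖z‖ ^ 2) := by ring
    rw [hdy, hR]
    linarith
end

section
/- Let K ⊆ ℝ^d be a symmetric closed convex set, n > 1, and σ as in the convexity lemma (non-increasing, C², σ ≡ R² on [0,1], σ ≡ 0 on [3CR, ∞), |σ'(t)| ≤ (t−1)/C for t ≥ 1, |σ''| ≤ 1/C, with C = 8n²/(n²−1)). Then the density x ↦ exp(−σ(d(x,K)) − ((n²−1)/(2n²))‖x‖²) is log-concave and even on ℝ^d. -/
open Metric Set

private lemma eps_le {a b : ℝ} (h : ∀ ε : ℝ, 0 < ε → a ≤ b + ε) : a ≤ b := by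
  by_contra h'
  push_neg at h'
  have := h ((a - b) / 2) (by linarith)
  linarith

private lemma combo_norm_sq {E : Type*} [NormedAddCommGroup E] [InnerProductSpace ℝ E]
    (a b : ℝ) (hab : a + b = 1) (x y : E) :
    ‖a • x + b • y‖ ^ 2 = a * ‖x‖ ^ 2 + b * ‖y‖ ^ 2 - a * b * ‖x - y‖ ^ 2 := by
  have h1 := real_inner_self_eq_norm_sq (a • x + b • y)
  have h2 := real_inner_self_eq_norm_sq (x - y)
  have h3 := real_inner_self_eq_norm_sq x
  have h4 := real_inner_self_eq_norm_sq y
  simp only [inner_add_left, inner_add_right, inner_smul_left, inner_smul_right,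
    inner_sub_left, inner_sub_right, RCLike.star_def, conj_trivial,
    real_inner_comm y x] at h1 h2
  linear_combination (-1 : ℝ) * h1 + a * h3 + b * h4 - a * b * h2 + (a * (inner ℝ x x : ℝ) + b * (inner ℝ y y : ℝ)) * hab

private lemma infDist_combo_le {E : Type*} [NormedAddCommGroup E] [InnerProductSpace ℝ E]
    {K : Set E} (hKne : K.Nonempty) (hKconv : Convex ℝ K)
    {a b : ℝ} (ha : 0 ≤ a) (hb : 0 ≤ b) (hab : a + b = 1) (x y : E) :
    infDist (a • x + b • y) K ≤ a * infDist x K + b * infDist y K := by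
  refine eps_le fun ε hε => ?_
  obtain ⟨p, hp, hxp⟩ := (infDist_lt_iff hKne).1
    (lt_add_of_pos_right (infDist x K) hε)
  obtain ⟨q, hq, hyq⟩ := (infDist_lt_iff hKne).1
    (lt_add_of_pos_right (infDist y K) hε)
  have hm : a • p + b • q ∈ K := hKconv hp hq ha hb hab
  have hdist : dist (a • x + b • y) (a • p + b • q) ≤ a * dist x p + b * dist y q := by
    have heq : a • x + b • y - (a • p + b • q) = a • (x - p) + b • (y - q) := by module
    rw [dist_eq_norm, heq, dist_eq_norm, dist_eq_norm]
    calc ‖a • (x - p) + b • (y - q)‖ ≤ ‖a • (x - p)‖ + ‖b • (y - q)‖ := norm_add_le _ _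
      _ = a * ‖x - p‖ + b * ‖y - q‖ := by
          rw [norm_smul, norm_smul, Real.norm_eq_abs, Real.norm_eq_abs,
            abs_of_nonneg ha, abs_of_nonneg hb]
  calc infDist (a • x + b • y) K ≤ dist (a • x + b • y) (a • p + b • q) :=
      infDist_le_dist_of_mem hm
    _ ≤ a * dist x p + b * dist y q := hdist
    _ ≤ a * (infDist x K + ε) + b * (infDist y K + ε) := by
        have := hxp.le; have := hyq.le; nlinarith
    _ = a * infDist x K + b * infDist y K + ε := by nlinarith

private lemma infDist_sq_combo_ge {E : Type*} [NormedAddCommGroup E] [InnerProductSpace ℝ E]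
    {K : Set E} (hKne : K.Nonempty)
    {a b : ℝ} (ha : 0 ≤ a) (hb : 0 ≤ b) (hab : a + b = 1) (x y : E) :
    a * infDist x K ^ 2 + b * infDist y K ^ 2 - a * b * ‖x - y‖ ^ 2
      ≤ infDist (a • x + b • y) K ^ 2 := by
  set z := a • x + b • y with hz
  set W : ℝ := a * infDist x K ^ 2 + b * infDist y K ^ 2 - a * b * ‖x - y‖ ^ 2 with hW
  have key : ∀ p ∈ K, W ≤ dist z p ^ 2 := by
    intro p hp
    have hid : dist z p ^ 2 = a * dist x p ^ 2 + b * dist y p ^ 2 - a * b * ‖x - y‖ ^ 2 := by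
      have h := combo_norm_sq a b hab (x - p) (y - p)
      have hpp : a • p + b • p = p := by rw [← add_smul, hab, one_smul]
      have h2 : a • (x - p) + b • (y - p) = z - p := by
        rw [hz]
        conv_rhs => rw [← hpp]
        module
      have h3 : x - p - (y - p) = x - y := by abel
      rw [h2, h3] at h
      rw [dist_eq_norm, dist_eq_norm, dist_eq_norm, h]
    have h1 : infDist x K ≤ dist x p := infDist_le_dist_of_mem hp
    have h2 : infDist y K ≤ dist y p := infDist_le_dist_of_mem hp
    have h3 : (0:ℝ) ≤ infDist x K := infDist_nonneg
    have h4 : (0:ℝ) ≤ infDist y K := infDist_nonneg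
    rw [hid, hW]
    have e1 : a * infDist x K ^ 2 ≤ a * dist x p ^ 2 :=
      mul_le_mul_of_nonneg_left (pow_le_pow_left₀ h3 h1 2) ha
    have e2 : b * infDist y K ^ 2 ≤ b * dist y p ^ 2 :=
      mul_le_mul_of_nonneg_left (pow_le_pow_left₀ h4 h2 2) hb
    linarith
  set r := Real.sqrt (max W 0) with hr
  have hrle : r ≤ infDist z K := by
    refine le_of_not_gt fun hlt => ?_
    obtain ⟨p, hp, hdp⟩ := (infDist_lt_iff hKne).1 hlt
    have : r ≤ dist z p := by
      rw [hr]
      calc Real.sqrt (max W 0) ≤ Real.sqrt (dist z p ^ 2) :=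
          Real.sqrt_le_sqrt (max_le (key p hp) (by positivity))
        _ = dist z p := Real.sqrt_sq dist_nonneg
    exact absurd hdp (not_lt.2 this)
  have hr2 : r ^ 2 = max W 0 := Real.sq_sqrt (le_max_right _ _)
  have : r ^ 2 ≤ infDist z K ^ 2 := by
    have h0 : (0:ℝ) ≤ r := Real.sqrt_nonneg _
    nlinarith [infDist_nonneg (x := z) (s := K)]
  calc W ≤ max W 0 := le_max_left _ _
    _ = r ^ 2 := hr2.symm
    _ ≤ infDist z K ^ 2 := this

private lemma sigma_taylor (C : ℝ) (hC : 0 < C) (σ : ℝ → ℝ) (hσ : ContDiff ℝ 2 σ)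
    (hσ'' : ∀ t, |deriv (deriv σ) t| ≤ 1 / C)
    {a b t s : ℝ} (ha : 0 ≤ a) (hb : 0 ≤ b) (hab : a + b = 1) :
    σ (a * t + b * s) ≤ a * σ t + b * σ s + a * b * (t - s) ^ 2 / (2 * C) := by
  set ψ : ℝ → ℝ := fun x => σ x + x ^ 2 / (2 * C) with hψ
  have hd1 : Differentiable ℝ σ := hσ.differentiable (by norm_num)
  have hd2 : ContDiff ℝ 1 (deriv σ) := by
    have h := (contDiff_succ_iff_deriv (n := 1)).1 (by exact_mod_cast hσ)
    exact h.2.2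
  have hψd : ∀ x : ℝ, HasDerivAt ψ (deriv σ x + x / C) x := by
    intro x
    have h1 : HasDerivAt (fun x : ℝ => x ^ 2 / (2 * C)) (x / C) x := by
      have := (hasDerivAt_pow 2 x).div_const (2 * C)
      convert this using 1
      · rfl
      · rfl
      · norm_num
        ring
    exact ((hd1 x).hasDerivAt).add h1
  have hψderiv : deriv ψ = fun x => deriv σ x + x / C := by
    funext x; exact (hψd x).deriv
  have hψd2 : ∀ x : ℝ, HasDerivAt (deriv ψ) (deriv (deriv σ) x + 1 / C) x := by
    intro x
    rw [hψderiv]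
    have h1 : HasDerivAt (fun x : ℝ => x / C) (1 / C) x := by
      simpa using (hasDerivAt_id x).div_const C
    exact ((hd2.differentiable (by norm_num) x).hasDerivAt).add h1
  have hconv : ConvexOn ℝ Set.univ ψ := by
    apply convexOn_univ_of_deriv2_nonneg
    · exact fun x => (hψd x).differentiableAt
    · exact fun x => (hψd2 x).differentiableAt
    · intro x
      have h2 : deriv (deriv ψ) x = deriv (deriv σ) x + 1 / C := (hψd2 x).deriv
      have h3 : deriv^[2] ψ x = deriv (deriv ψ) x := by
        simp [Function.iterate_succ, Function.iterate_one]
      rw [h3, h2]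
      have := abs_le.1 (hσ'' x)
      linarith [this.1]
  have hkey := hconv.2 (Set.mem_univ t) (Set.mem_univ s) ha hb hab
  simp only [smul_eq_mul, hψ] at hkey
  have halg : a * t ^ 2 + b * s ^ 2 - (a * t + b * s) ^ 2 = a * b * (t - s) ^ 2 := by
    have hb' : b = 1 - a := by linarith
    subst hb'; ring
  have : σ (a * t + b * s) + (a * t + b * s) ^ 2 / (2 * C)
      ≤ a * σ t + b * σ s + (a * t ^ 2 + b * s ^ 2) / (2 * C) := by
    calc σ (a * t + b * s) + (a * t + b * s) ^ 2 / (2 * C)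
        ≤ a * (σ t + t ^ 2 / (2 * C)) + b * (σ s + s ^ 2 / (2 * C)) := hkey
      _ = a * σ t + b * σ s + (a * t ^ 2 + b * s ^ 2) / (2 * C) := by ring
  have hfin : σ (a * t + b * s)
      ≤ a * σ t + b * σ s + (a * t ^ 2 + b * s ^ 2 - (a * t + b * s) ^ 2) / (2 * C) := by
    have := sub_le_sub_right this ((a * t + b * s) ^ 2 / (2 * C))
    calc σ (a * t + b * s)
        = σ (a * t + b * s) + (a * t + b * s) ^ 2 / (2 * C) - (a * t + b * s) ^ 2 / (2 * C) := by
          ring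
      _ ≤ a * σ t + b * σ s + (a * t ^ 2 + b * s ^ 2) / (2 * C)
            - (a * t + b * s) ^ 2 / (2 * C) := by linarith
      _ = a * σ t + b * σ s + (a * t ^ 2 + b * s ^ 2 - (a * t + b * s) ^ 2) / (2 * C) := by
          ring
  rw [halg] at hfin
  calc σ (a * t + b * s) ≤ a * σ t + b * σ s + a * b * (t - s) ^ 2 / (2 * C) := hfin

private lemma sigma_mvt (C : ℝ) (hC : 0 < C) (σ : ℝ → ℝ) (hσ : ContDiff ℝ 2 σ)
    (hσ'1 : ∀ t, 1 ≤ t → |deriv σ t| ≤ (t - 1) / C)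
    {p q : ℝ} (hp : 1 ≤ p) (hpq : p ≤ q) :
    σ p - σ q ≤ (q - 1) * (q - p) / C := by
  rcases eq_or_lt_of_le hpq with rfl | h
  · simp
  · obtain ⟨ξ, hξ, hd⟩ := exists_deriv_eq_slope σ h (hσ.continuous.continuousOn)
      ((hσ.differentiable (by norm_num)).differentiableOn)
  -- deriv σ ξ = (σ q - σ p) / (q - p)
    have h1 : 1 ≤ ξ := le_of_lt (lt_of_le_of_lt hp hξ.1)
    have h2 := abs_le.1 (hσ'1 ξ h1)
    have hqp : 0 < q - p := by linarith
    have hσeq : σ p - σ q = -(deriv σ ξ) * (q - p) := by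
      field_simp at hd
      linarith [hd]
    rw [hσeq]
    have hb1 : -(deriv σ ξ) ≤ (ξ - 1) / C := by linarith [h2.1]
    have hb2 : (ξ - 1) / C ≤ (q - 1) / C := by
      gcongr
      linarith [hξ.2]
    calc -(deriv σ ξ) * (q - p) ≤ (q - 1) / C * (q - p) :=
        mul_le_mul_of_nonneg_right (hb1.trans hb2) hqp.le
      _ = (q - 1) * (q - p) / C := by ring
set_option maxHeartbeats 1600000 in
/-- the density x ↦ exp(−σ(d(x,K)) − ((n²−1)/(2n²))‖x‖²) is even and
log-concave. -/
theorem stmt14 (d : ℕ) (K : Set (EuclideanSpace ℝ (Fin d))) (n R : ℝ) (σ : ℝ → ℝ)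
    (hKne : K.Nonempty) (hKsym : ∀ x ∈ K, -x ∈ K)
    (hKclosed : IsClosed K) (hKconv : Convex ℝ K)
    (hn : 1 < n) (hR : 0 < R) (C : ℝ) (hCdef : C = 8 * n ^ 2 / (n ^ 2 - 1))
    (hσ : ContDiff ℝ 2 σ) (hσmono : AntitoneOn σ (Set.Ici 0))
    (hσone : ∀ t ∈ Set.Icc (0 : ℝ) 1, σ t = R ^ 2)
    (hσzero : ∀ t, 3 * C * R ≤ t → σ t = 0)
    (hσ'1 : ∀ t, 1 ≤ t → |deriv σ t| ≤ (t - 1) / C)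
    (hσ'' : ∀ t, |deriv (deriv σ) t| ≤ 1 / C) :
    (∀ x, Real.exp (-σ (Metric.infDist (-x) K) - ((n ^ 2 - 1) / (2 * n ^ 2)) * ‖-x‖ ^ 2) =
          Real.exp (-σ (Metric.infDist x K) - ((n ^ 2 - 1) / (2 * n ^ 2)) * ‖x‖ ^ 2)) ∧
    ConvexOn ℝ Set.univ (fun x =>
      -Real.log (Real.exp (-σ (Metric.infDist x K) -
        ((n ^ 2 - 1) / (2 * n ^ 2)) * ‖x‖ ^ 2))) := by
  have hn2 : (0:ℝ) < n ^ 2 - 1 := by nlinarith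
  have hC : 0 < C := by rw [hCdef]; positivity
  set c : ℝ := (n ^ 2 - 1) / (2 * n ^ 2) with hc
  have hn0 : (0:ℝ) < n ^ 2 := by nlinarith
  have hcC : c = 4 / C := by
    rw [hCdef, hc]
    field_simp
    ring
  have hc0 : 0 < c := by rw [hc]; positivity
  constructor
  · intro x
    have hsym : ∀ w : EuclideanSpace ℝ (Fin d), infDist (-w) K ≤ infDist w K := by
      intro w
      refine eps_le fun ε hε => ?_
      obtain ⟨p, hp, hdp⟩ := (infDist_lt_iff hKne).1 (lt_add_of_pos_right (infDist w K) hε)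
      calc infDist (-w) K ≤ dist (-w) (-p) := infDist_le_dist_of_mem (hKsym p hp)
        _ = dist w p := dist_neg_neg w p
        _ ≤ infDist w K + ε := hdp.le
    have h2 : infDist (-x) K = infDist x K :=
      le_antisymm (hsym x) (by simpa using hsym (-x))
    rw [h2, norm_neg]
  · have hfun : (fun x : EuclideanSpace ℝ (Fin d) =>
        -Real.log (Real.exp (-σ (infDist x K) - c * ‖x‖ ^ 2)))
        = fun x => σ (infDist x K) + c * ‖x‖ ^ 2 := by
      funext x; rw [Real.log_exp]; ring
    rw [hfun]
    clear hfun
    refine ⟨convex_univ, ?_⟩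
    intro x _ y _ a b ha hb hab
    simp only [smul_eq_mul]
    set t := infDist x K with hT
    set s := infDist y K with hS
    set u := infDist (a • x + b • y) K with hU
    set δ := ‖x - y‖ with hD
    have h0t : 0 ≤ t := infDist_nonneg
    have h0s : 0 ≤ s := infDist_nonneg
    have h0u : 0 ≤ u := infDist_nonneg
    have hδ0 : 0 ≤ δ := norm_nonneg _
    have huv : u ≤ a * t + b * s := infDist_combo_le hKne hKconv ha hb hab x y
    have hsq : a * t ^ 2 + b * s ^ 2 - a * b * δ ^ 2 ≤ u ^ 2 :=
      infDist_sq_combo_ge hKne ha hb hab x y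
    have hts : t ≤ s + δ := by
      have h := infDist_le_infDist_add_dist (x := x) (y := y) (s := K)
      rwa [dist_eq_norm] at h
    have hst : s ≤ t + δ := by
      have h := infDist_le_infDist_add_dist (x := y) (y := x) (s := K)
      rwa [dist_eq_norm, norm_sub_rev] at h
    have habx : a • x + b • x = x := by rw [← add_smul, hab, one_smul]
    have haby : a • y + b • y = y := by rw [← add_smul, hab, one_smul]
    have htu : t ≤ u + b * δ := by
      have h := infDist_le_infDist_add_dist (x := x) (y := a • x + b • y) (s := K)
      have hd : dist x (a • x + b • y) = b * δ := by
        rw [dist_eq_norm]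
        have hxx : x - (a • x + b • y) = b • (x - y) := by
          have h1a : (1:ℝ) - a = b := by linarith
          have hm : x - (a • x + b • y) = (1 - a) • x - b • y := by module
          rw [hm, h1a, ← smul_sub]
        rw [hxx, norm_smul, Real.norm_eq_abs, abs_of_nonneg hb]
      rw [hd] at h
      exact h
    have hsu : s ≤ u + a * δ := by
      have h := infDist_le_infDist_add_dist (x := y) (y := a • x + b • y) (s := K)
      have hd : dist y (a • x + b • y) = a * δ := by
        rw [dist_eq_norm]
        have hyy : y - (a • x + b • y) = a • (y - x) := by
          have h1b : (1:ℝ) - b = a := by linarith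
          have hm : y - (a • x + b • y) = (1 - b) • y - a • x := by module
          rw [hm, h1b, ← smul_sub]
        rw [hyy, norm_smul, Real.norm_eq_abs, abs_of_nonneg ha, ← norm_sub_rev x y]
      rw [hd] at h
      exact h
    rw [combo_norm_sq a b hab x y, ← hD]
    clear_value t s u δ
    have hv0 : 0 ≤ a * t + b * s := add_nonneg (mul_nonneg ha h0t) (mul_nonneg hb h0s)
    have hvu : a * t + b * s ≤ u + 2 * (a * b) * δ := by
      nlinarith [mul_le_mul_of_nonneg_left htu ha, mul_le_mul_of_nonneg_left hsu hb]
    have hvid : (a * t + b * s) ^ 2 = a * t ^ 2 + b * s ^ 2 - a * b * (t - s) ^ 2 := by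
      linear_combination (a * t ^ 2 + b * s ^ 2) * hab
    have hv2u2 : (a * t + b * s) ^ 2 - u ^ 2 ≤ a * b * δ ^ 2 := by
      have h1 : 0 ≤ a * b * (t - s) ^ 2 := by positivity
      linarith only [hvid, hsq, h1]
    have h4ab : 4 * (a * b) ≤ 1 := by nlinarith [sq_nonneg (a - b)]
    have hab0 : 0 ≤ a * b := mul_nonneg ha hb
    have hts2 : (t - s) ^ 2 ≤ δ ^ 2 := by
      nlinarith [mul_nonneg (by linarith : (0:ℝ) ≤ δ - (t - s)) (by linarith : (0:ℝ) ≤ δ + (t - s))]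
    have step1 : σ (a * t + b * s) ≤ a * σ t + b * σ s + a * b * (t - s) ^ 2 / (2 * C) :=
      sigma_taylor C hC σ hσ hσ'' ha hb hab
    have step2 : σ u - σ (a * t + b * s) ≤ 3 * (a * b * δ ^ 2) / C := by
      by_cases hv1 : a * t + b * s ≤ 1
      · have e1 : σ u = R ^ 2 := hσone u ⟨h0u, le_trans huv hv1⟩
        have e2 : σ (a * t + b * s) = R ^ 2 := hσone _ ⟨hv0, hv1⟩
        rw [e1, e2]
        have : (0:ℝ) ≤ 3 * (a * b * δ ^ 2) / C := by positivity
        linarith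
      · push_neg at hv1
        by_cases hu1 : 1 ≤ u
        · have hA := sigma_mvt C hC σ hσ hσ'1 hu1 huv
          have hP : (a * t + b * s - 1) * (a * t + b * s - u) ≤ 3 * (a * b * δ ^ 2) := by
            have h1 : (u - 1) * (a * t + b * s - u) ≤ (a * t + b * s + u) * (a * t + b * s - u) :=
              mul_le_mul_of_nonneg_right (by linarith) (by linarith)
            have h2 : (a * t + b * s - u) ^ 2 ≤ (2 * (a * b) * δ) ^ 2 := by
              have h3 : 0 ≤ a * t + b * s - u := by linarith
              nlinarith [hvu]
            nlinarith [hv2u2, mul_nonneg hab0 (sq_nonneg δ)]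
          calc σ u - σ (a * t + b * s)
              ≤ (a * t + b * s - 1) * (a * t + b * s - u) / C := hA
            _ ≤ 3 * (a * b * δ ^ 2) / C := by gcongr
        · push_neg at hu1
          have hσu : σ u = R ^ 2 := hσone u ⟨h0u, hu1.le⟩
          have hσ1 : σ 1 = R ^ 2 := hσone 1 ⟨by norm_num, le_refl 1⟩
          have hA := sigma_mvt C hC σ hσ hσ'1 (le_refl 1) hv1.le
          have hP : (a * t + b * s - 1) * (a * t + b * s - 1) ≤ 3 * (a * b * δ ^ 2) := by
            have h3 : a * t + b * s - 1 ≤ 2 * (a * b) * δ := by linarith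
            nlinarith [mul_nonneg hab0 (sq_nonneg δ), mul_nonneg hab0 hδ0]
          rw [hσu, ← hσ1]
          calc σ 1 - σ (a * t + b * s)
              ≤ (a * t + b * s - 1) * (a * t + b * s - 1) / C := hA
            _ ≤ 3 * (a * b * δ ^ 2) / C := by gcongr
    have hhalfle : a * b * (t - s) ^ 2 / (2 * C) ≤ (a * b * δ ^ 2 / C) / 2 := by
      rw [div_le_div_iff₀ (by linarith) (by norm_num)]
      have : a * b * (t - s) ^ 2 ≤ a * b * δ ^ 2 := mul_le_mul_of_nonneg_left hts2 hab0
      calc a * b * (t - s) ^ 2 * 2 ≤ a * b * δ ^ 2 * 2 := by linarith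
        _ = a * b * δ ^ 2 / C * (2 * C) := by field_simp
    have hXc : 0 ≤ a * b * δ ^ 2 / C := by positivity
    have hcomb : σ u - (a * σ t + b * σ s) ≤ 4 * (a * b * δ ^ 2) / C := by
      have h3 : 3 * (a * b * δ ^ 2) / C = 3 * (a * b * δ ^ 2 / C) := by ring
      have h4 : 4 * (a * b * δ ^ 2) / C = 4 * (a * b * δ ^ 2 / C) := by ring
      linarith [step1, step2]
    have hgoal : σ u - (a * σ t + b * σ s) ≤ c * (a * b * δ ^ 2) := by
      rw [hcC]
      calc σ u - (a * σ t + b * σ s) ≤ 4 * (a * b * δ ^ 2) / C := hcomb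
        _ = 4 / C * (a * b * δ ^ 2) := by ring
    have hexp : c * (a * ‖x‖ ^ 2 + b * ‖y‖ ^ 2 - a * b * δ ^ 2)
        = a * (c * ‖x‖ ^ 2) + b * (c * ‖y‖ ^ 2) - c * (a * b * δ ^ 2) := by ring
    rw [hexp]
    linarith [hgoal]
end
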